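/- For ω ~ N(0, σ²) with σ > 0, the variance of the capped fluctuation min(ω, ω̄) is strictly less than σ² for every finite cap ω̄ ∈ ℝ, and Var(min(ω, ω̄)) → σ² as ω̄ → ∞. -/

import Mathlib

open MeasureTheory ProbabilityTheory Filter Real Set
open scoped NNReal ENNReal

namespace CappedVar

variable {v : ℝ≥0}

lemma pdf_eq (v : ℝ≥0) (x : ℝ) :
    gaussianPDFReal 0 v x
      = (Real.sqrt (2 * π * v))⁻¹ * Real.exp (-(2 * (v:ℝ))⁻¹ * x ^ 2) := by
  rw [gaussianPDFReal, sub_zero, neg_div, neg_mul, div_eq_inv_mul]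

lemma pdf_nonneg (v : ℝ≥0) (x : ℝ) : 0 ≤ gaussianPDFReal 0 v x := by
  rw [gaussianPDFReal]; positivity

lemma hb_pos (hv : v ≠ 0) : 0 < (2 * (v:ℝ))⁻¹ := by
  have : (0:ℝ) < v := by exact_mod_cast hv.bot_lt
  positivity

lemma integrable_sq_exp (hv : v ≠ 0) :
    Integrable (fun x : ℝ => x ^ 2 * Real.exp (-(2 * (v:ℝ))⁻¹ * x ^ 2)) := by
  have h := integrable_rpow_mul_exp_neg_mul_sq (hb_pos hv) (s := 2) (by norm_num)
  have h2 : ∀ x : ℝ, x ^ (2:ℝ) = x ^ (2:ℕ) := fun x => by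
    rw [show ((2:ℝ)) = ((2:ℕ):ℝ) by norm_num, Real.rpow_natCast]
  simpa [h2] using h

lemma integral_sq_pdf (hv : v ≠ 0) :
    ∫ x : ℝ, x ^ 2 * gaussianPDFReal 0 v x = v := by
  have hvpos : (0:ℝ) < v := by exact_mod_cast hv.bot_lt
  set b : ℝ := (2 * (v:ℝ))⁻¹ with hbdef
  have hb : 0 < b := hb_pos hv
  have key : ∫ x : ℝ in Ioi 0, x ^ 2 * Real.exp (-b * x ^ 2)
      = b ^ (-(3:ℝ)/2) * (1/2) * Real.Gamma (3/2) := by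
    have h := integral_rpow_mul_exp_neg_mul_rpow (p := 2) (q := 2) (b := b)
      (by norm_num) (by norm_num) hb
    have h2 : ∀ x : ℝ, x ^ (2:ℝ) = x ^ (2:ℕ) := fun x => by
      rw [show ((2:ℝ)) = ((2:ℕ):ℝ) by norm_num, Real.rpow_natCast]
    rw [show (-(3:ℝ)/2) = -((2:ℝ)+1)/2 by norm_num,
      show ((3:ℝ)/2) = ((2:ℝ)+1)/2 by norm_num]
    rw [← h]
    refine setIntegral_congr_fun measurableSet_Ioi fun x _ => ?_
    rw [h2]
  have gam : Real.Gamma (3/2) = Real.sqrt π / 2 := by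
    rw [show (3/2 : ℝ) = 1/2 + 1 by norm_num,
      Real.Gamma_add_one (by norm_num), Real.Gamma_one_half_eq]
    ring
  have h2v : (0:ℝ) < 2 * v := by positivity
  have brw : b ^ (-(3:ℝ)/2) = (2 * (v:ℝ)) * Real.sqrt (2 * (v:ℝ)) := by
    rw [hbdef, ← Real.rpow_neg_one (2 * (v:ℝ)), ← Real.rpow_mul h2v.le]
    rw [show (-1 * (-(3:ℝ)/2)) = 1 + 1/2 by norm_num, Real.rpow_add h2v,
      Real.rpow_one, ← Real.sqrt_eq_rpow]
  have even : ∫ x : ℝ, x ^ 2 * gaussianPDFReal 0 v x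
      = 2 * ∫ x : ℝ in Ioi 0,
          x ^ 2 * ((Real.sqrt (2 * π * v))⁻¹ * Real.exp (-b * x ^ 2)) := by
    rw [← integral_comp_abs
      (f := fun t : ℝ => t ^ 2 * ((Real.sqrt (2 * π * v))⁻¹ * Real.exp (-b * t ^ 2)))]
    congr 1
    funext x
    rw [pdf_eq, sq_abs]
  rw [even]
  have pull : ∫ x : ℝ in Ioi 0,
        x ^ 2 * ((Real.sqrt (2 * π * v))⁻¹ * Real.exp (-b * x ^ 2))
      = (Real.sqrt (2 * π * v))⁻¹ * ∫ x : ℝ in Ioi 0, x ^ 2 * Real.exp (-b * x ^ 2) := by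
    rw [← integral_const_mul]
    congr 1
    funext x
    ring
  rw [pull, key, gam, brw]
  have hsplit : Real.sqrt (2 * π * v) = Real.sqrt π * Real.sqrt (2 * v) := by
    rw [show (2 * π * (v:ℝ)) = π * (2 * v) by ring, Real.sqrt_mul pi_pos.le]
  rw [hsplit]
  have hπ : Real.sqrt π ≠ 0 := by positivity
  have h2v' : Real.sqrt (2 * (v:ℝ)) ≠ 0 := by positivity
  field_simp

lemma integral_gauss (hv : v ≠ 0) (g : ℝ → ℝ) :
    ∫ x, g x ∂(gaussianReal 0 v) = ∫ x, g x * gaussianPDFReal 0 v x := by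
  rw [gaussianReal_of_var_ne_zero _ hv]
  have hmeas : Measurable fun x => (gaussianPDFReal 0 v x).toNNReal :=
    (measurable_gaussianPDFReal 0 v).real_toNNReal
  have : gaussianPDF 0 v = fun x => ((gaussianPDFReal 0 v x).toNNReal : ℝ≥0∞) := rfl
  rw [this, integral_withDensity_eq_integral_smul hmeas g]
  congr 1
  funext x
  rw [NNReal.smul_def, Real.coe_toNNReal _ (pdf_nonneg v x), smul_eq_mul, mul_comm]

lemma integrable_gauss_iff (hv : v ≠ 0) (g : ℝ → ℝ) :
    Integrable g (gaussianReal 0 v)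
      ↔ Integrable (fun x => g x * gaussianPDFReal 0 v x) volume := by
  rw [gaussianReal_of_var_ne_zero _ hv, gaussianPDF_def,
    integrable_withDensity_iff (measurable_gaussianPDFReal 0 v).ennreal_ofReal
      (ae_of_all _ fun x => ENNReal.ofReal_lt_top)]
  constructor <;> intro h <;> refine h.congr (ae_of_all _ fun x => ?_) <;>
    simp [ENNReal.toReal_ofReal (pdf_nonneg v x)]

lemma integrable_sq_gauss (hv : v ≠ 0) :
    Integrable (fun x : ℝ => x ^ 2) (gaussianReal 0 v) := by
  rw [integrable_gauss_iff hv]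
  have : (fun x : ℝ => x ^ 2 * gaussianPDFReal 0 v x)
      = fun x => (Real.sqrt (2 * π * v))⁻¹
          * (x ^ 2 * Real.exp (-(2 * (v:ℝ))⁻¹ * x ^ 2)) := by
    funext x; rw [pdf_eq]; ring
  rw [this]
  exact (integrable_sq_exp hv).const_mul _

lemma integrable_id_gauss (hv : v ≠ 0) :
    Integrable (fun x : ℝ => x) (gaussianReal 0 v) := by
  rw [integrable_gauss_iff hv]
  have : (fun x : ℝ => x * gaussianPDFReal 0 v x)
      = fun x => (Real.sqrt (2 * π * v))⁻¹
          * (x * Real.exp (-(2 * (v:ℝ))⁻¹ * x ^ 2)) := by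
    funext x; rw [pdf_eq]; ring
  rw [this]
  exact (integrable_mul_exp_neg_mul_sq (hb_pos hv)).const_mul _

lemma integral_id_gauss (hv : v ≠ 0) : ∫ x, x ∂(gaussianReal 0 v) = 0 := by
  rw [integral_gauss hv]
  set I := ∫ x : ℝ, x * gaussianPDFReal 0 v x with hI
  have h1 : ∫ x : ℝ, (-x) * gaussianPDFReal 0 v (-x) = I :=
    integral_neg_eq_self (fun t => t * gaussianPDFReal 0 v t) volume
  have h2 : ∫ x : ℝ, (-x) * gaussianPDFReal 0 v (-x) = -I := by
    have : (fun x : ℝ => (-x) * gaussianPDFReal 0 v (-x))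
        = fun x => -(x * gaussianPDFReal 0 v x) := by
      funext x
      rw [pdf_eq, pdf_eq, neg_sq]
      ring
    rw [this, integral_neg]
  have : I = 0 := by linarith [h1.symm.trans h2]
  exact this

lemma integral_sq_gauss (hv : v ≠ 0) :
    ∫ x, x ^ 2 ∂(gaussianReal 0 v) = v := by
  rw [integral_gauss hv (fun x => x ^ 2), integral_sq_pdf hv]

lemma integrable_min_sq_gauss (hv : v ≠ 0) (c : ℝ) :
    Integrable (fun x : ℝ => (min x c) ^ 2) (gaussianReal 0 v) := by
  refine Integrable.mono' ((integrable_sq_gauss hv).add (integrable_const (c ^ 2)))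
    ((measurable_id.min measurable_const).pow_const 2).aestronglyMeasurable
    (ae_of_all _ fun x => ?_)
  rw [Real.norm_eq_abs, abs_of_nonneg (sq_nonneg _)]
  simp only [Pi.add_apply]
  rcases min_choice x c with h | h <;> rw [h] <;> nlinarith [sq_nonneg x, sq_nonneg c]

lemma memℒp_min (hv : v ≠ 0) (c : ℝ) :
    MemLp (fun x : ℝ => min x c) 2 (gaussianReal 0 v) :=
  (memLp_two_iff_integrable_sq
    (measurable_id.min measurable_const).aestronglyMeasurable).mpr
    (integrable_min_sq_gauss hv c)

lemma integrable_min_gauss (hv : v ≠ 0) (c : ℝ) :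
    Integrable (fun x : ℝ => min x c) (gaussianReal 0 v) :=
  (memℒp_min hv c).integrable one_le_two

section Pair

variable {μ : Measure ℝ} [IsProbabilityMeasure μ] {g : ℝ → ℝ}

lemma integrable_pair (hg : Integrable g μ) (hg2 : Integrable (fun x => g x ^ 2) μ) :
    Integrable (fun z : ℝ × ℝ => (g z.1 - g z.2) ^ 2) (μ.prod μ) := by
  have e : (fun z : ℝ × ℝ => (g z.1 - g z.2) ^ 2)
      = fun z => (g z.1 ^ 2 * 1 + 1 * g z.2 ^ 2) - 2 * (g z.1 * g z.2) := by
    funext z; ring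
  rw [e]
  exact ((hg2.mul_prod (integrable_const 1)).add
    ((integrable_const 1).mul_prod hg2)).sub ((hg.mul_prod hg).const_mul 2)

lemma integral_pair (hg : Integrable g μ) (hg2 : Integrable (fun x => g x ^ 2) μ) :
    ∫ z, (g z.1 - g z.2) ^ 2 ∂(μ.prod μ)
      = 2 * ((∫ x, g x ^ 2 ∂μ) - (∫ x, g x ∂μ) ^ 2) := by
  have e : (fun z : ℝ × ℝ => (g z.1 - g z.2) ^ 2)
      = fun z => (g z.1 ^ 2 * 1 + 1 * g z.2 ^ 2) - 2 * (g z.1 * g z.2) := by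
    funext z; ring
  have i1 : Integrable (fun z : ℝ × ℝ => g z.1 ^ 2 * 1) (μ.prod μ) :=
    hg2.mul_prod (integrable_const 1)
  have i2 : Integrable (fun z : ℝ × ℝ => 1 * g z.2 ^ 2) (μ.prod μ) :=
    (integrable_const 1).mul_prod hg2
  have i12 : Integrable (fun z : ℝ × ℝ => g z.1 ^ 2 * 1 + 1 * g z.2 ^ 2) (μ.prod μ) :=
    i1.add i2
  have i3 : Integrable (fun z : ℝ × ℝ => 2 * (g z.1 * g z.2)) (μ.prod μ) :=
    (hg.mul_prod hg).const_mul 2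
  rw [e, integral_sub i12 i3, integral_add i1 i2]
  have h3 : ∫ z : ℝ × ℝ, 2 * (g z.1 * g z.2) ∂(μ.prod μ)
      = 2 * ∫ z : ℝ × ℝ, g z.1 * g z.2 ∂(μ.prod μ) := integral_const_mul 2 _
  rw [h3, integral_prod_mul (fun x : ℝ => g x ^ 2) (fun _ : ℝ => (1:ℝ)),
    integral_prod_mul (fun _ : ℝ => (1:ℝ)) (fun x : ℝ => g x ^ 2),
    integral_prod_mul g g]
  simp only [integral_const, measure_univ, probReal_univ, ENNReal.toReal_one, smul_eq_mul, one_mul, mul_one]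
  ring

end Pair

lemma min_lip (a b c : ℝ) : (min a c - min b c) ^ 2 ≤ (a - b) ^ 2 := by
  rcases le_total a c with h1 | h1 <;> rcases le_total b c with h2 | h2
  · rw [min_eq_left h1, min_eq_left h2]
  · rw [min_eq_left h1, min_eq_right h2]; nlinarith
  · rw [min_eq_right h1, min_eq_left h2]; nlinarith
  · rw [min_eq_right h1, min_eq_right h2]; nlinarith [sq_nonneg (a - b)]

lemma gauss_Ioo_ne_zero (hv : v ≠ 0) {a b : ℝ} (h : a < b) :
    gaussianReal 0 v (Ioo a b) ≠ 0 := by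
  intro h0
  have h1 := gaussianReal_absolutelyContinuous' 0 hv h0
  rw [Real.volume_Ioo] at h1
  exact (ENNReal.ofReal_pos.mpr (by linarith)).ne' h1

lemma abs_min_le {c : ℝ} (hc : 0 ≤ c) (x : ℝ) : |min x c| ≤ |x| := by
  rcases le_total x c with h | h
  · rw [min_eq_left h]
  · rw [min_eq_right h, abs_of_nonneg hc]
    exact le_trans h (le_abs_self x)

end CappedVar

open CappedVar


open MeasureTheory ProbabilityTheory Filter

set_option maxHeartbeats 1000000 in
/-- For `ω ~ N(0, σ²)` with `σ > 0`, the variance of `min(ω, ω̄)` is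
strictly less than `σ²` for every finite cap `ω̄`, and tends to `σ²` as `ω̄ → ∞`. -/
theorem capped_variance (σ : ℝ) (hσ : 0 < σ) :
    (∀ ωbar : ℝ,
        variance (fun ω => min ω ωbar) (gaussianReal 0 (Real.toNNReal (σ ^ 2)))
          < σ ^ 2) ∧
      Tendsto
        (fun ωbar : ℝ =>
          variance (fun ω => min ω ωbar) (gaussianReal 0 (Real.toNNReal (σ ^ 2))))
        atTop (nhds (σ ^ 2)) := by
  have hσ2 : (0:ℝ) < σ ^ 2 := by positivity
  set v : ℝ≥0 := (σ ^ 2).toNNReal with hvdef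
  have hv : v ≠ 0 := by
    simp only [hvdef, ne_eq, Real.toNNReal_eq_zero, not_le]
    exact hσ2
  have hvr : ((v:ℝ)) = σ ^ 2 := Real.coe_toNNReal _ hσ2.le
  have hid : Integrable (fun x : ℝ => x) (gaussianReal 0 v) := integrable_id_gauss hv
  have hsq : Integrable (fun x : ℝ => x ^ 2) (gaussianReal 0 v) := integrable_sq_gauss hv
  have hEid : ∫ x, x ∂(gaussianReal 0 v) = 0 := integral_id_gauss hv
  have hEsq : ∫ x, x ^ 2 ∂(gaussianReal 0 v) = σ ^ 2 := by rw [integral_sq_gauss hv, hvr]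
  have hvar : ∀ c : ℝ, variance (fun ω => min ω c) (gaussianReal 0 v)
      = (∫ x, (min x c) ^ 2 ∂(gaussianReal 0 v)) - (∫ x, min x c ∂(gaussianReal 0 v)) ^ 2 := by
    intro c
    rw [variance_eq_sub (memℒp_min hv c)]
    rfl
  constructor
  · intro c
    have hmin : Integrable (fun x => min x c) (gaussianReal 0 v) := integrable_min_gauss hv c
    have hminsq : Integrable (fun x => (min x c) ^ 2) (gaussianReal 0 v) := integrable_min_sq_gauss hv c
    have k1 : ∫ z : ℝ × ℝ, (min z.1 c - min z.2 c) ^ 2 ∂((gaussianReal 0 v).prod (gaussianReal 0 v))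
        = 2 * ((∫ x, (min x c) ^ 2 ∂(gaussianReal 0 v)) - (∫ x, min x c ∂(gaussianReal 0 v)) ^ 2) :=
      CappedVar.integral_pair hmin hminsq
    have k2 : ∫ z : ℝ × ℝ, (z.1 - z.2) ^ 2 ∂((gaussianReal 0 v).prod (gaussianReal 0 v)) = 2 * σ ^ 2 := by
      rw [CappedVar.integral_pair hid hsq, hEid, hEsq]; ring
    have iA : Integrable (fun z : ℝ × ℝ => (z.1 - z.2) ^ 2) ((gaussianReal 0 v).prod (gaussianReal 0 v)) :=
      integrable_pair hid hsq
    have iB : Integrable (fun z : ℝ × ℝ => (min z.1 c - min z.2 c) ^ 2) ((gaussianReal 0 v).prod (gaussianReal 0 v)) :=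
      integrable_pair hmin hminsq
    have iD : Integrable
        (fun z : ℝ × ℝ => (z.1 - z.2) ^ 2 - (min z.1 c - min z.2 c) ^ 2) ((gaussianReal 0 v).prod (gaussianReal 0 v)) :=
      iA.sub iB
    have hsub : ∫ z : ℝ × ℝ, ((z.1 - z.2) ^ 2 - (min z.1 c - min z.2 c) ^ 2) ∂((gaussianReal 0 v).prod (gaussianReal 0 v))
        = (∫ z : ℝ × ℝ, (z.1 - z.2) ^ 2 ∂((gaussianReal 0 v).prod (gaussianReal 0 v)))
          - ∫ z : ℝ × ℝ, (min z.1 c - min z.2 c) ^ 2 ∂((gaussianReal 0 v).prod (gaussianReal 0 v)) := integral_sub iA iB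
    have hpos : 0 < ∫ z : ℝ × ℝ,
        ((z.1 - z.2) ^ 2 - (min z.1 c - min z.2 c) ^ 2) ∂((gaussianReal 0 v).prod (gaussianReal 0 v)) := by
      have hnn : ∀ z : ℝ × ℝ, 0 ≤ (z.1 - z.2) ^ 2 - (min z.1 c - min z.2 c) ^ 2 :=
        fun z => sub_nonneg.mpr (min_lip z.1 z.2 c)
      refine (integral_pos_iff_support_of_nonneg hnn iD).mpr ?_
      refine lt_of_lt_of_le ?_ (measure_mono (?_ :
        Ioo c (c+1) ×ˢ Ioo (c+1) (c+2) ⊆ Function.support _))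
      · rw [Measure.prod_prod]
        exact ENNReal.mul_pos (gauss_Ioo_ne_zero hv (by linarith))
          (gauss_Ioo_ne_zero hv (by linarith))
      · rintro ⟨z1, z2⟩ ⟨hz1, hz2⟩
        rw [Set.mem_Ioo] at hz1 hz2
        have e1 : min z1 c = c := min_eq_right hz1.1.le
        have e2 : min z2 c = c := min_eq_right (by linarith : c ≤ z2)
        simp only [Function.mem_support, e1, e2, sub_self]
        intro hcon
        have : (z1 - z2) ^ 2 = 0 := by linarith [hcon]
        have := pow_eq_zero_iff (n := 2) (by norm_num) |>.mp this
        have : z1 < z2 := by linarith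
        linarith [sub_eq_zero.mp ‹z1 - z2 = 0›]
    have hlt : ∫ z : ℝ × ℝ, (min z.1 c - min z.2 c) ^ 2 ∂((gaussianReal 0 v).prod (gaussianReal 0 v))
        < ∫ z : ℝ × ℝ, (z.1 - z.2) ^ 2 ∂((gaussianReal 0 v).prod (gaussianReal 0 v)) := by linarith
    rw [hvar c]
    linarith
  · have hA : Tendsto (fun c : ℝ => ∫ x, (min x c) ^ 2 ∂(gaussianReal 0 v)) atTop (nhds (σ ^ 2)) := by
      rw [← hEsq]
      refine tendsto_integral_filter_of_dominated_convergence (fun x => x ^ 2)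
        (Eventually.of_forall fun c =>
          ((measurable_id.min measurable_const).pow_const 2).aestronglyMeasurable)
        ?_ hsq (ae_of_all _ fun x => ?_)
      · filter_upwards [eventually_ge_atTop (0:ℝ)] with c hc
        refine ae_of_all _ fun x => ?_
        rw [Real.norm_eq_abs, abs_of_nonneg (sq_nonneg _), ← sq_abs (min x c), ← sq_abs x]
        exact pow_le_pow_left₀ (abs_nonneg _) (abs_min_le hc x) 2
      · have h0 : (fun _ : ℝ => x ^ 2) =ᶠ[atTop] fun c => (min x c) ^ 2 := by
          filter_upwards [eventually_ge_atTop x] with c hc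
          rw [min_eq_left hc]
        exact tendsto_const_nhds.congr' h0
    have hB : Tendsto (fun c : ℝ => ∫ x, min x c ∂(gaussianReal 0 v)) atTop
        (nhds (∫ x, x ∂(gaussianReal 0 v))) := by
      apply tendsto_integral_filter_of_dominated_convergence (fun x => |x|)
      · exact Eventually.of_forall fun c =>
          (measurable_id.min measurable_const).aestronglyMeasurable
      · filter_upwards [eventually_ge_atTop (0:ℝ)] with c hc
        exact ae_of_all _ fun x => by rw [Real.norm_eq_abs]; exact abs_min_le hc x
      · exact hid.abs
      · refine ae_of_all _ fun x => ?_
        have h0 : (fun _ : ℝ => x) =ᶠ[atTop] fun c => min x c := by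
          filter_upwards [eventually_ge_atTop x] with c hc
          rw [min_eq_left hc]
        exact tendsto_const_nhds.congr' h0
    rw [hEid] at hB
    have hT := hA.sub (hB.pow 2)
    rw [show σ ^ 2 - (0:ℝ) ^ 2 = σ ^ 2 by ring] at hT
    exact hT.congr fun c => (hvar c).symm
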